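/- Let X be a nonempty finite set, N ≥ 1, and let q be a process on X^{N+2} with full support. Then among all Markov processes m on X^{N+2} with full-support transition probabilities and m(x_0) = q(x_0), the Markovian projection proj_M(q) is both the unique minimizer of KL(q || m) and the unique minimizer of Σ_{n=1}^{N+1} E_{q(x_{t_{n-1}})} KL( q(x_{t_n} | x_{t_{n-1}}) || m(x_{t_n} | x_{t_{n-1}}) ); in particular these two optimization problems have the same unique solution. -/

import Mathlib

open Finset

/-- A probability mass function on a finite type. -/
def IsPMF {Z : Type*} [Fintype Z] (p : Z → ℝ) : Prop :=
  (∀ z, 0 ≤ p z) ∧ ∑ z, p z = 1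

/-- KL divergence between two pmfs on a finite type (with `0 log 0 := 0`,
which is automatic since `0 * log (0/b) = 0`). -/
noncomputable def KLd {Z : Type*} [Fintype Z] (a b : Z → ℝ) : ℝ :=
  ∑ z, a z * Real.log (a z / b z)

/-- Trajectories with `N` intermediate time steps: indices `0, 1, …, N+1`,
where index `0` is time `0` and index `N+1` is time `1`. -/
abbrev Traj (X : Type*) (N : ℕ) := Fin (N + 2) → X

variable {X : Type*} [Fintype X] [DecidableEq X] {N : ℕ}

/-- One-time marginal of a process at time index `i`. -/
noncomputable def timeMarg (q : Traj X N → ℝ) (i : Fin (N + 2)) (x : X) : ℝ :=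
  ∑ ω : Traj X N, if ω i = x then q ω else 0

/-- Joint marginal of the endpoints `(x_0, x_1)`. -/
noncomputable def endMarg (q : Traj X N → ℝ) (a b : X) : ℝ :=
  ∑ ω : Traj X N, if ω 0 = a ∧ ω (Fin.last (N + 1)) = b then q ω else 0

/-- Joint marginal at the neighboring time indices `n` and `n+1`. -/
noncomputable def pairMarg (q : Traj X N → ℝ) (n : Fin (N + 1)) (y z : X) : ℝ :=
  ∑ ω : Traj X N, if ω n.castSucc = y ∧ ω n.succ = z then q ω else 0

/-- Transition probability `q(x_{t_n} = z | x_{t_{n-1}} = y)` for the step from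
time index `n` to `n+1`. -/
noncomputable def transP (q : Traj X N → ℝ) (n : Fin (N + 1)) (y z : X) : ℝ :=
  pairMarg q n y z / timeMarg q n.castSucc y

/-- Glue endpoints `a`, `b` and inner states `v` into a trajectory. -/
def glue (a : X) (v : Fin N → X) (b : X) : Traj X N :=
  Fin.cons a (Fin.snoc v b)

/-- The bridge `q(x_in | x_0 = a, x_1 = b)`, as a function of the inner states. -/
noncomputable def bridge (q : Traj X N → ℝ) (a b : X) (v : Fin N → X) : ℝ :=
  q (glue a v b) / endMarg q a b

/-- A process is Markov if it factorizes through its one-step transitions. -/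
def IsMarkov (q : Traj X N → ℝ) : Prop :=
  ∀ ω : Traj X N,
    q ω = timeMarg q 0 (ω 0) * ∏ n : Fin (N + 1), transP q n (ω n.castSucc) (ω n.succ)

/-- A process `q` is reciprocal w.r.t. a full-support reference process `qref` if its
bridges coincide with those of `qref` wherever they are defined. -/
def IsReciprocal (qref q : Traj X N → ℝ) : Prop :=
  ∀ a b : X, 0 < endMarg q a b → ∀ v : Fin N → X, bridge q a b v = bridge qref a b v

/-- Reciprocal projection of `q` w.r.t. `qref`:
`proj_R(q)(x_0, x_in, x_1) = qref(x_in | x_0, x_1) · q(x_0, x_1)`. -/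
noncomputable def projR (qref q : Traj X N → ℝ) (ω : Traj X N) : ℝ :=
  (qref ω / endMarg qref (ω 0) (ω (Fin.last (N + 1)))) *
    endMarg q (ω 0) (ω (Fin.last (N + 1)))

/-- Markovian projection of `q`:
`proj_M(q)(x_0, x_in, x_1) = q(x_0) ∏_{n=1}^{N+1} q(x_{t_n} | x_{t_{n-1}})`. -/
noncomputable def projM (q : Traj X N → ℝ) (ω : Traj X N) : ℝ :=
  timeMarg q 0 (ω 0) * ∏ n : Fin (N + 1), transP q n (ω n.castSucc) (ω n.succ)

/-- Marginal of the bridge of `q` at time index `i`: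
`q(x_{t_i} = y | x_0 = a, x_1 = b)`. -/
noncomputable def bridgeAt (q : Traj X N → ℝ) (i : Fin (N + 2)) (y a b : X) : ℝ :=
  (∑ ω : Traj X N, if ω 0 = a ∧ ω i = y ∧ ω (Fin.last (N + 1)) = b then q ω else 0) /
    endMarg q a b

/-- Conditional transition given the terminal point:
`q(x_{t_n} = z | x_{t_{n-1}} = y, x_1 = b)` for the step from time index `n` to `n+1`. -/
noncomputable def condTrans (q : Traj X N → ℝ) (n : Fin (N + 1)) (y z b : X) : ℝ :=
  (∑ ω : Traj X N,
      if ω n.castSucc = y ∧ ω n.succ = z ∧ ω (Fin.last (N + 1)) = b then q ω else 0) /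
    (∑ ω : Traj X N, if ω n.castSucc = y ∧ ω (Fin.last (N + 1)) = b then q ω else 0)

/-- Membership in `Π_N(p_0, p_1)`: a process with prescribed marginals at times 0 and 1. -/
def InPiN (p0 p1 : X → ℝ) (q : Traj X N → ℝ) : Prop :=
  IsPMF q ∧ (∀ x, timeMarg q 0 x = p0 x) ∧ (∀ x, timeMarg q (Fin.last (N + 1)) x = p1 x)

/-- Membership in `Π(p_0, p_1)`: couplings on `X²` with prescribed marginals. -/
def InPi2 (p0 p1 : X → ℝ) (s : X × X → ℝ) : Prop :=
  IsPMF s ∧ (∀ a, ∑ b, s (a, b) = p0 a) ∧ (∀ b, ∑ a, s (a, b) = p1 b)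

/-- Feasible class for the Markovian-projection optimization problems: Markov processes
`m` with full-support transition probabilities and the same initial marginal as `q`. -/
def MarkovFeasible {X : Type*} [Fintype X] [DecidableEq X] {N : ℕ}
    (q m : Traj X N → ℝ) : Prop :=
  IsPMF m ∧ IsMarkov m ∧ (∀ (n : Fin (N + 1)) (y z : X), 0 < transP m n y z) ∧
    (∀ x, timeMarg m 0 x = timeMarg q 0 x)


lemma timeMarg_nonneg {q : Traj X N → ℝ} (hq : ∀ ω, 0 ≤ q ω) (i : Fin (N+2)) (x : X) :
    0 ≤ timeMarg q i x :=
  Finset.sum_nonneg fun ω _ => by split; exacts [hq ω, le_rfl]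

lemma timeMarg_pos {q : Traj X N → ℝ} (hq : ∀ ω, 0 < q ω) (i : Fin (N+2)) (x : X) :
    0 < timeMarg q i x := by
  classical
  unfold timeMarg
  have h := Finset.single_le_sum (f := fun ω : Traj X N => if ω i = x then q ω else 0)
      (fun ω _ => by split; exacts [(hq ω).le, le_rfl])
      (mem_univ (fun _ : Fin (N+2) => x))
  simp only [if_pos rfl] at h
  exact lt_of_lt_of_le (hq _) h

lemma pairMarg_nonneg {q : Traj X N → ℝ} (hq : ∀ ω, 0 ≤ q ω) (n : Fin (N+1)) (y z : X) :
    0 ≤ pairMarg q n y z :=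
  Finset.sum_nonneg fun ω _ => by split; exacts [hq ω, le_rfl]

lemma pairMarg_pos {q : Traj X N → ℝ} (hq : ∀ ω, 0 < q ω) (n : Fin (N+1)) (y z : X) :
    0 < pairMarg q n y z := by
  classical
  set ω₀ : Traj X N := Function.update (fun _ => y) n.succ z with hω₀
  have hne : n.castSucc ≠ n.succ := (Fin.castSucc_lt_succ : n.castSucc < n.succ).ne
  have h1 : ω₀ n.castSucc = y := by simp [hω₀, Function.update_of_ne hne]
  have h2 : ω₀ n.succ = z := by simp [hω₀]
  unfold pairMarg
  have h := Finset.single_le_sum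
      (f := fun ω : Traj X N => if ω n.castSucc = y ∧ ω n.succ = z then q ω else 0)
      (fun ω _ => by split; exacts [(hq ω).le, le_rfl]) (mem_univ ω₀)
  rw [if_pos ⟨h1, h2⟩] at h
  exact lt_of_lt_of_le (hq ω₀) h

lemma sum_pairMarg_right (q : Traj X N → ℝ) (n : Fin (N+1)) (y : X) :
    ∑ z, pairMarg q n y z = timeMarg q n.castSucc y := by
  unfold pairMarg timeMarg
  rw [Finset.sum_comm]
  refine Finset.sum_congr rfl fun ω _ => ?_
  by_cases h : ω n.castSucc = y
  · simp [h]
  · simp [h]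

lemma sum_pairMarg_left (q : Traj X N → ℝ) (n : Fin (N+1)) (z : X) :
    ∑ y, pairMarg q n y z = timeMarg q n.succ z := by
  unfold pairMarg timeMarg
  rw [Finset.sum_comm]
  refine Finset.sum_congr rfl fun ω _ => ?_
  by_cases h : ω n.succ = z
  · simp [h]
  · simp [h]

lemma sum_timeMarg (q : Traj X N → ℝ) (i : Fin (N+2)) :
    ∑ x, timeMarg q i x = ∑ ω, q ω := by
  unfold timeMarg
  rw [Finset.sum_comm]
  exact Finset.sum_congr rfl fun ω _ => by simp

lemma sum_transP {q : Traj X N → ℝ} (hq : ∀ ω, 0 < q ω) (n : Fin (N+1)) (y : X) :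
    ∑ z, transP q n y z = 1 := by
  unfold transP
  rw [← Finset.sum_div, sum_pairMarg_right]
  exact div_self (timeMarg_pos hq _ _).ne'

lemma transP_pos {q : Traj X N → ℝ} (hq : ∀ ω, 0 < q ω) (n : Fin (N+1)) (y z : X) :
    0 < transP q n y z :=
  div_pos (pairMarg_pos hq n y z) (timeMarg_pos hq _ _)

lemma timeMarg_mul_transP {q : Traj X N → ℝ} (hq : ∀ ω, 0 < q ω) (n : Fin (N+1)) (y z : X) :
    timeMarg q n.castSucc y * transP q n y z = pairMarg q n y z := by
  unfold transP
  field_simp [(timeMarg_pos hq n.castSucc y).ne']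

lemma timeMarg_recursion {q : Traj X N → ℝ} (hq : ∀ ω, 0 < q ω) (n : Fin (N+1)) (z : X) :
    timeMarg q n.succ z = ∑ y, timeMarg q n.castSucc y * transP q n y z := by
  rw [← sum_pairMarg_left q n z]
  exact Finset.sum_congr rfl fun y _ => (timeMarg_mul_transP hq n y z).symm

/-- group a sum over trajectories by the values at two neighboring coordinates -/
lemma group_pair (q : Traj X N → ℝ) (n : Fin (N+1)) (f : X → X → ℝ) :
    ∑ ω : Traj X N, q ω * f (ω n.castSucc) (ω n.succ) =
      ∑ y, ∑ z, pairMarg q n y z * f y z := by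
  unfold pairMarg
  have h1 : ∀ ω : Traj X N, q ω * f (ω n.castSucc) (ω n.succ) =
      ∑ y, ∑ z, if ω n.castSucc = y ∧ ω n.succ = z then q ω * f y z else 0 := by
    intro ω; simp [ite_and]
  rw [Finset.sum_congr rfl fun ω _ => h1 ω]
  simp_rw [Finset.sum_mul, ite_mul, zero_mul]
  rw [Finset.sum_comm]
  exact Finset.sum_congr rfl fun y _ => Finset.sum_comm

/-! ### chain sums -/

lemma sum_snoc {M : ℕ} (f : (Fin (M+1) → X) → ℝ) :
    ∑ p : Fin (M+1) → X, f p = ∑ z : X, ∑ p' : Fin M → X, f (Fin.snoc p' z : Fin (M+1) → X) := by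
  rw [← (Fin.snocEquiv (fun _ : Fin (M+1) => X)).sum_comp, Fintype.sum_prod_type]
  rfl

lemma sum_fin_one (f : (Fin 1 → X) → ℝ) :
    ∑ p : Fin 1 → X, f p = ∑ x : X, f (fun _ => x) := by
  rw [← (Equiv.funUnique (Fin 1) X).symm.sum_comp]
  rfl

lemma chain_marg : ∀ (M : ℕ) (K : Fin M → X → X → ℝ) (ν : Fin (M+1) → X → ℝ),
    (∀ n y, ∑ z, K n y z = 1) →
    (∀ (n : Fin M) (z : X), ν n.succ z = ∑ y, ν n.castSucc y * K n y z) →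
    ∀ (i : Fin (M+1)) (F : X → ℝ),
    (∑ p : Fin (M+1) → X,
      (ν 0 (p 0) * ∏ n : Fin M, K n (p n.castSucc) (p n.succ)) * F (p i))
      = ∑ c, ν i c * F c := by
  intro M
  induction M with
  | zero =>
    intro K ν _ _ i F
    rw [sum_fin_one]
    have hi : i = 0 := Fin.fin_one_eq_zero i
    simp [hi]
  | succ M ih =>
    intro K ν hK hrec i F
    rw [sum_snoc]
    have hprod : ∀ (p' : Fin (M+1) → X) (z : X),
        (∏ n : Fin (M+1), K n ((Fin.snoc p' z : Fin (M+2) → X) n.castSucc) ((Fin.snoc p' z : Fin (M+2) → X) n.succ))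
          = (∏ n : Fin M, K n.castSucc (p' n.castSucc) (p' n.succ))
            * K (Fin.last M) (p' (Fin.last M)) z := by
      intro p' z
      rw [Fin.prod_univ_castSucc]
      congr 1
      · refine Finset.prod_congr rfl fun n _ => ?_
        rw [Fin.succ_castSucc, Fin.snoc_castSucc, Fin.snoc_castSucc]
      · rw [Fin.succ_last, Fin.snoc_castSucc, Fin.snoc_last]
    have h0 : ∀ (p' : Fin (M+1) → X) (z : X), (Fin.snoc p' z : Fin (M+2) → X) 0 = p' 0 := by
      intro p' z
      have : (0 : Fin (M+2)) = Fin.castSucc 0 := rfl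
      rw [this, Fin.snoc_castSucc]
    cases i using Fin.lastCases with
    | last =>
      have key : ∀ z : X, (∑ p' : Fin (M+1) → X,
          (ν 0 (p' 0) * ∏ n : Fin M, K n.castSucc (p' n.castSucc) (p' n.succ))
            * (K (Fin.last M) (p' (Fin.last M)) z * F z))
          = ∑ c, ν (Fin.castSucc (Fin.last M)) c * (K (Fin.last M) c z * F z) := by
        intro z
        exact ih (fun n => K n.castSucc) (fun n => ν n.castSucc) (fun n y => hK n.castSucc y)
          (fun n w => by rw [← Fin.succ_castSucc]; exact hrec n.castSucc w)
          (Fin.last M) (fun c => K (Fin.last M) c z * F z)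
      calc ∑ z : X, ∑ p' : Fin (M+1) → X,
            (ν 0 ((Fin.snoc p' z : Fin (M+2) → X) 0) *
              ∏ n : Fin (M+1), K n ((Fin.snoc p' z : Fin (M+2) → X) n.castSucc) ((Fin.snoc p' z : Fin (M+2) → X) n.succ))
              * F ((Fin.snoc p' z : Fin (M+2) → X) (Fin.last (M+1)))
          = ∑ z : X, ∑ p' : Fin (M+1) → X,
            (ν 0 (p' 0) * ∏ n : Fin M, K n.castSucc (p' n.castSucc) (p' n.succ))
              * (K (Fin.last M) (p' (Fin.last M)) z * F z) := by
            refine Finset.sum_congr rfl fun z _ => Finset.sum_congr rfl fun p' _ => ?_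
            rw [hprod, h0, Fin.snoc_last]
            ring
        _ = ∑ z : X, ∑ c, ν (Fin.castSucc (Fin.last M)) c * (K (Fin.last M) c z * F z) := by
            exact Finset.sum_congr rfl fun z _ => key z
        _ = ∑ c, ν (Fin.last (M+1)) c * F c := by
            refine Finset.sum_congr rfl fun z _ => ?_
            rw [← Fin.succ_last, hrec (Fin.last M) z, Finset.sum_mul]
            exact Finset.sum_congr rfl fun c _ => by ring
    | cast j =>
      calc ∑ z : X, ∑ p' : Fin (M+1) → X,
            (ν 0 ((Fin.snoc p' z : Fin (M+2) → X) 0) *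
              ∏ n : Fin (M+1), K n ((Fin.snoc p' z : Fin (M+2) → X) n.castSucc) ((Fin.snoc p' z : Fin (M+2) → X) n.succ))
              * F ((Fin.snoc p' z : Fin (M+2) → X) (Fin.castSucc j))
          = ∑ p' : Fin (M+1) → X, ∑ z : X,
            ((ν 0 (p' 0) * ∏ n : Fin M, K n.castSucc (p' n.castSucc) (p' n.succ))
              * F (p' j)) * K (Fin.last M) (p' (Fin.last M)) z := by
            rw [Finset.sum_comm]
            refine Finset.sum_congr rfl fun p' _ => Finset.sum_congr rfl fun z _ => ?_
            rw [hprod, h0, Fin.snoc_castSucc]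
            ring
        _ = ∑ p' : Fin (M+1) → X,
            (ν 0 (p' 0) * ∏ n : Fin M, K n.castSucc (p' n.castSucc) (p' n.succ)) * F (p' j) := by
            refine Finset.sum_congr rfl fun p' _ => ?_
            rw [← Finset.mul_sum, hK, mul_one]
        _ = ∑ c, ν (Fin.castSucc j) c * F c := by
            exact ih (fun n => K n.castSucc) (fun n => ν n.castSucc) (fun n y => hK n.castSucc y)
              (fun n w => by rw [← Fin.succ_castSucc]; exact hrec n.castSucc w) j F

lemma chain_pair : ∀ (M : ℕ) (K : Fin M → X → X → ℝ) (ν : Fin (M+1) → X → ℝ),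
    (∀ n y, ∑ z, K n y z = 1) →
    (∀ (n : Fin M) (z : X), ν n.succ z = ∑ y, ν n.castSucc y * K n y z) →
    ∀ (i : Fin M) (F : X → X → ℝ),
    (∑ p : Fin (M+1) → X,
      (ν 0 (p 0) * ∏ n : Fin M, K n (p n.castSucc) (p n.succ)) * F (p i.castSucc) (p i.succ))
      = ∑ y, ∑ z, (ν i.castSucc y * K i y z) * F y z := by
  intro M
  induction M with
  | zero => intro _ _ _ _ i; exact absurd i.2 (by omega)
  | succ M ih =>
    intro K ν hK hrec i F
    rw [sum_snoc]
    have hprod : ∀ (p' : Fin (M+1) → X) (z : X),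
        (∏ n : Fin (M+1), K n ((Fin.snoc p' z : Fin (M+2) → X) n.castSucc)
          ((Fin.snoc p' z : Fin (M+2) → X) n.succ))
          = (∏ n : Fin M, K n.castSucc (p' n.castSucc) (p' n.succ))
            * K (Fin.last M) (p' (Fin.last M)) z := by
      intro p' z
      rw [Fin.prod_univ_castSucc]
      congr 1
      · refine Finset.prod_congr rfl fun n _ => ?_
        rw [Fin.succ_castSucc, Fin.snoc_castSucc, Fin.snoc_castSucc]
      · rw [Fin.succ_last, Fin.snoc_castSucc, Fin.snoc_last]
    have h0 : ∀ (p' : Fin (M+1) → X) (z : X), (Fin.snoc p' z : Fin (M+2) → X) 0 = p' 0 := by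
      intro p' z
      have : (0 : Fin (M+2)) = Fin.castSucc 0 := rfl
      rw [this, Fin.snoc_castSucc]
    cases i using Fin.lastCases with
    | last =>
      have key := chain_marg M (fun n => K n.castSucc) (fun n => ν n.castSucc)
          (fun n y => hK n.castSucc y)
          (fun n w => by rw [← Fin.succ_castSucc]; exact hrec n.castSucc w)
          (Fin.last M) (fun y => ∑ z, K (Fin.last M) y z * F y z)
      calc ∑ z : X, ∑ p' : Fin (M+1) → X,
            (ν 0 ((Fin.snoc p' z : Fin (M+2) → X) 0) *
              ∏ n : Fin (M+1), K n ((Fin.snoc p' z : Fin (M+2) → X) n.castSucc)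
                ((Fin.snoc p' z : Fin (M+2) → X) n.succ))
              * F ((Fin.snoc p' z : Fin (M+2) → X) (Fin.last M).castSucc)
                  ((Fin.snoc p' z : Fin (M+2) → X) (Fin.last M).succ)
          = ∑ p' : Fin (M+1) → X,
            (ν 0 (p' 0) * ∏ n : Fin M, K n.castSucc (p' n.castSucc) (p' n.succ))
              * ∑ z, K (Fin.last M) (p' (Fin.last M)) z * F (p' (Fin.last M)) z := by
            rw [Finset.sum_comm]
            refine Finset.sum_congr rfl fun p' _ => ?_
            rw [Finset.mul_sum]
            refine Finset.sum_congr rfl fun z _ => ?_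
            rw [hprod, h0, Fin.succ_last, Fin.snoc_castSucc, Fin.snoc_last]
            ring
        _ = ∑ y, ν (Fin.castSucc (Fin.last M)) y * ∑ z, K (Fin.last M) y z * F y z := key
        _ = ∑ y, ∑ z, (ν (Fin.last M).castSucc y * K (Fin.last M) y z) * F y z := by
            refine Finset.sum_congr rfl fun y _ => ?_
            rw [Finset.mul_sum]
            exact Finset.sum_congr rfl fun z _ => by ring
    | cast j =>
      calc ∑ z : X, ∑ p' : Fin (M+1) → X,
            (ν 0 ((Fin.snoc p' z : Fin (M+2) → X) 0) *
              ∏ n : Fin (M+1), K n ((Fin.snoc p' z : Fin (M+2) → X) n.castSucc)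
                ((Fin.snoc p' z : Fin (M+2) → X) n.succ))
              * F ((Fin.snoc p' z : Fin (M+2) → X) j.castSucc.castSucc)
                  ((Fin.snoc p' z : Fin (M+2) → X) j.castSucc.succ)
          = ∑ p' : Fin (M+1) → X, ∑ z : X,
            ((ν 0 (p' 0) * ∏ n : Fin M, K n.castSucc (p' n.castSucc) (p' n.succ))
              * F (p' j.castSucc) (p' j.succ)) * K (Fin.last M) (p' (Fin.last M)) z := by
            rw [Finset.sum_comm]
            refine Finset.sum_congr rfl fun p' _ => Finset.sum_congr rfl fun z _ => ?_
            rw [hprod, h0, Fin.succ_castSucc, Fin.snoc_castSucc, Fin.snoc_castSucc]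
            ring
        _ = ∑ p' : Fin (M+1) → X,
            (ν 0 (p' 0) * ∏ n : Fin M, K n.castSucc (p' n.castSucc) (p' n.succ))
              * F (p' j.castSucc) (p' j.succ) := by
            refine Finset.sum_congr rfl fun p' _ => ?_
            rw [← Finset.mul_sum, hK, mul_one]
        _ = ∑ y, ∑ z, (ν j.castSucc.castSucc y * K j.castSucc y z) * F y z := by
            exact ih (fun n => K n.castSucc) (fun n => ν n.castSucc) (fun n y => hK n.castSucc y)
              (fun n w => by rw [← Fin.succ_castSucc]; exact hrec n.castSucc w) j F

/-! ### marginals of the Markovian projection -/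

lemma projM_timeMarg {q : Traj X N → ℝ} (hq : ∀ ω, 0 < q ω) (i : Fin (N+2)) (x : X) :
    timeMarg (projM q) i x = timeMarg q i x := by
  have h := chain_marg (N+1) (transP q) (fun j => timeMarg q j) (sum_transP hq)
    (fun n z => timeMarg_recursion hq n z) i (fun c => if c = x then 1 else 0)
  simp only [mul_ite, mul_one, mul_zero] at h
  conv_lhs => unfold timeMarg projM
  rw [h]
  simp

lemma projM_pairMarg {q : Traj X N → ℝ} (hq : ∀ ω, 0 < q ω) (n : Fin (N+1)) (y z : X) :
    pairMarg (projM q) n y z = pairMarg q n y z := by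
  have h := chain_pair (N+1) (transP q) (fun j => timeMarg q j) (sum_transP hq)
    (fun m w => timeMarg_recursion hq m w) n (fun c d => if c = y ∧ d = z then 1 else 0)
  simp only [mul_ite, mul_one, mul_zero] at h
  conv_lhs => unfold pairMarg projM
  rw [h]
  simp [ite_and, timeMarg_mul_transP hq]

lemma projM_transP {q : Traj X N → ℝ} (hq : ∀ ω, 0 < q ω) (n : Fin (N+1)) (y z : X) :
    transP (projM q) n y z = transP q n y z := by
  unfold transP
  rw [projM_pairMarg hq, projM_timeMarg hq]

lemma projM_pos {q : Traj X N → ℝ} (hq : ∀ ω, 0 < q ω) (ω : Traj X N) : 0 < projM q ω :=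
  mul_pos (timeMarg_pos hq _ _) (Finset.prod_pos fun n _ => transP_pos hq n _ _)

/-! ### Gibbs' inequality -/

lemma gibbs_pointwise {a b : ℝ} (ha : 0 ≤ a) (hb : 0 < b) :
    a - b ≤ a * Real.log (a / b) ∧ (a * Real.log (a / b) = a - b → a = b) := by
  rcases eq_or_lt_of_le ha with h | h
  · constructor
    · rw [← h]; simp; linarith
    · intro he; rw [← h] at he ⊢; simp at he; linarith
  · have hinv : Real.log (b / a) = - Real.log (a / b) := by
      rw [← Real.log_inv]
      congr 1
      field_simp
    have hlog : 1 - b / a ≤ Real.log (a / b) := by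
      have := Real.log_le_sub_one_of_pos (show (0:ℝ) < b / a from div_pos hb h)
      linarith
    have h2 : a * (1 - b / a) = a - b := by field_simp
    constructor
    · have := mul_le_mul_of_nonneg_left hlog (le_of_lt h)
      linarith
    · intro he
      by_contra hne
      have hba : b / a ≠ 1 := by
        intro h1
        apply hne
        field_simp at h1
        linarith
      have hs := Real.log_lt_sub_one_of_pos (div_pos hb h) hba
      have h3 : 1 - b / a < Real.log (a / b) := by linarith
      have h4 := (mul_lt_mul_iff_right₀ h).2 h3
      linarith

lemma gibbs {Z : Type*} [Fintype Z] {a b : Z → ℝ} (ha : ∀ x, 0 ≤ a x) (hb : ∀ x, 0 < b x)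
    (hab : ∑ x, a x = ∑ x, b x) :
    0 ≤ KLd a b ∧ (KLd a b = 0 → a = b) := by
  have hsum : ∑ x, (a x * Real.log (a x / b x) - (a x - b x)) = KLd a b := by
    rw [Finset.sum_sub_distrib, Finset.sum_sub_distrib, hab]
    unfold KLd
    ring
  have hnn : ∀ x ∈ (univ : Finset Z), 0 ≤ a x * Real.log (a x / b x) - (a x - b x) :=
    fun x _ => sub_nonneg.2 (gibbs_pointwise (ha x) (hb x)).1
  constructor
  · rw [← hsum]
    exact Finset.sum_nonneg hnn
  · intro h0
    funext x
    have := (Finset.sum_eq_zero_iff_of_nonneg hnn).1 (by rw [hsum, h0]) x (mem_univ x)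
    exact (gibbs_pointwise (ha x) (hb x)).2 (by linarith)

noncomputable def Dkl (q m : Traj X N → ℝ) : ℝ :=
  ∑ n : Fin (N+1), ∑ y : X, timeMarg q n.castSucc y *
    KLd (fun z : X => transP q n y z) (fun z : X => transP m n y z)

lemma Dkl_eq_pairs {q : Traj X N → ℝ} (hq : ∀ ω, 0 < q ω) (m : Traj X N → ℝ) :
    Dkl q m = ∑ n : Fin (N+1), ∑ y, ∑ z,
      pairMarg q n y z * Real.log (transP q n y z / transP m n y z) := by
  unfold Dkl KLd
  refine Finset.sum_congr rfl fun n _ => Finset.sum_congr rfl fun y _ => ?_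
  rw [Finset.mul_sum]
  refine Finset.sum_congr rfl fun z _ => ?_
  rw [← mul_assoc, timeMarg_mul_transP hq]

lemma feasible_pos {q m : Traj X N → ℝ} (hq : ∀ ω, 0 < q ω) (hm : MarkovFeasible q m)
    (ω : Traj X N) : 0 < m ω := by
  rw [hm.2.1 ω, hm.2.2.2 (ω 0)]
  exact mul_pos (timeMarg_pos hq 0 (ω 0)) (Finset.prod_pos fun n _ => hm.2.2.1 n _ _)

lemma KL_identity {q m : Traj X N → ℝ} (hq : ∀ ω, 0 < q ω) (hm : MarkovFeasible q m) :
    KLd q m = KLd q (projM q) + Dkl q m := by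
  have hmpos : ∀ ω, 0 < m ω := feasible_pos hq hm
  have hratio : ∀ ω : Traj X N, projM q ω / m ω =
      ∏ n : Fin (N+1), (transP q n (ω n.castSucc) (ω n.succ)
        / transP m n (ω n.castSucc) (ω n.succ)) := by
    intro ω
    rw [Finset.prod_div_distrib]
    unfold projM
    rw [hm.2.1 ω, hm.2.2.2 (ω 0),
      mul_div_mul_left _ _ (timeMarg_pos hq 0 (ω 0)).ne']
  have hlog : ∀ ω : Traj X N, Real.log (projM q ω / m ω) =
      ∑ n : Fin (N+1), Real.log (transP q n (ω n.castSucc) (ω n.succ)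
        / transP m n (ω n.castSucc) (ω n.succ)) := by
    intro ω
    rw [hratio ω]
    exact Real.log_prod fun n _ =>
      (div_pos (transP_pos hq n _ _) (hm.2.2.1 n _ _)).ne'
  have key : KLd q m - KLd q (projM q) = Dkl q m := by
    unfold KLd
    rw [← Finset.sum_sub_distrib]
    calc ∑ ω : Traj X N, (q ω * Real.log (q ω / m ω) - q ω * Real.log (q ω / projM q ω))
        = ∑ ω : Traj X N, q ω * Real.log (projM q ω / m ω) := by
          refine Finset.sum_congr rfl fun ω _ => ?_
          rw [Real.log_div (hq ω).ne' (hmpos ω).ne',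
            Real.log_div (hq ω).ne' (projM_pos hq ω).ne',
            Real.log_div (projM_pos hq ω).ne' (hmpos ω).ne']
          ring
      _ = ∑ n : Fin (N+1), ∑ ω : Traj X N, q ω *
            Real.log (transP q n (ω n.castSucc) (ω n.succ)
              / transP m n (ω n.castSucc) (ω n.succ)) := by
          rw [Finset.sum_comm]
          refine Finset.sum_congr rfl fun ω _ => ?_
          rw [hlog ω, Finset.mul_sum]
      _ = ∑ n : Fin (N+1), ∑ y, ∑ z,
            pairMarg q n y z * Real.log (transP q n y z / transP m n y z) := by
          exact Finset.sum_congr rfl fun n _ =>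
            group_pair q n (fun y z => Real.log (transP q n y z / transP m n y z))
      _ = Dkl q m := (Dkl_eq_pairs hq m).symm
  linarith [key]

lemma Dkl_nonneg {q m : Traj X N → ℝ} (hq : ∀ ω, 0 < q ω) (hm : MarkovFeasible q m) :
    0 ≤ Dkl q m := by
  have hmpos : ∀ ω, 0 < m ω := feasible_pos hq hm
  refine Finset.sum_nonneg fun n _ => Finset.sum_nonneg fun y _ => ?_
  refine mul_nonneg (timeMarg_nonneg (fun ω => (hq ω).le) _ _) ?_
  exact (gibbs (fun z => (transP_pos hq n y z).le) (fun z => hm.2.2.1 n y z)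
    (by rw [sum_transP hq n y, sum_transP hmpos n y])).1

lemma Dkl_eq_zero {q m : Traj X N → ℝ} (hq : ∀ ω, 0 < q ω) (hm : MarkovFeasible q m)
    (h0 : Dkl q m = 0) : m = projM q := by
  have hmpos : ∀ ω, 0 < m ω := feasible_pos hq hm
  have htrans : ∀ (n : Fin (N+1)) (y z : X), transP m n y z = transP q n y z := by
    intro n y z
    have houter : ∀ n ∈ (univ : Finset (Fin (N+1))), (0:ℝ) ≤ ∑ y, timeMarg q n.castSucc y *
        KLd (fun z : X => transP q n y z) (fun z : X => transP m n y z) := by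
      intro n _
      refine Finset.sum_nonneg fun y _ => mul_nonneg (timeMarg_nonneg (fun ω => (hq ω).le) _ _) ?_
      exact (gibbs (fun z => (transP_pos hq n y z).le) (fun z => hm.2.2.1 n y z)
        (by rw [sum_transP hq n y, sum_transP hmpos n y])).1
    have h1 := (Finset.sum_eq_zero_iff_of_nonneg houter).1 h0 n (mem_univ n)
    have hinner : ∀ y ∈ (univ : Finset X), (0:ℝ) ≤ timeMarg q n.castSucc y *
        KLd (fun z : X => transP q n y z) (fun z : X => transP m n y z) := by
      intro y _
      refine mul_nonneg (timeMarg_nonneg (fun ω => (hq ω).le) _ _) ?_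
      exact (gibbs (fun z => (transP_pos hq n y z).le) (fun z => hm.2.2.1 n y z)
        (by rw [sum_transP hq n y, sum_transP hmpos n y])).1
    have h2 := (Finset.sum_eq_zero_iff_of_nonneg hinner).1 h1 y (mem_univ y)
    have hKL : KLd (fun z : X => transP q n y z) (fun z : X => transP m n y z) = 0 := by
      have := (timeMarg_pos hq n.castSucc y).ne'
      exact by
        rcases mul_eq_zero.1 h2 with h | h
        · exact absurd h this
        · exact h
    have := (gibbs (fun z => (transP_pos hq n y z).le) (fun z => hm.2.2.1 n y z)
      (by rw [sum_transP hq n y, sum_transP hmpos n y])).2 hKL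
    exact (congrFun this z).symm
  funext ω
  rw [hm.2.1 ω, hm.2.2.2 (ω 0)]
  unfold projM
  congr 1
  exact Finset.prod_congr rfl fun n _ => htrans n _ _

lemma KLd_self {Z : Type*} [Fintype Z] {a : Z → ℝ} (ha : ∀ z, 0 < a z) : KLd a a = 0 := by
  unfold KLd
  refine Finset.sum_eq_zero fun z _ => ?_
  rw [div_self (ha z).ne', Real.log_one, mul_zero]

/-- Two equivalent objectives for the Markovian projection. Among Markov
processes `m` with full-support transitions and `m(x_0) = q(x_0)`, the Markovian projection
`proj_M(q)` is both the unique minimizer of `KL(q ‖ m)` and the unique minimizer of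
`Σ_{n=1}^{N+1} E_{q(x_{t_{n-1}})} KL(q(x_{t_n}|x_{t_{n-1}}) ‖ m(x_{t_n}|x_{t_{n-1}}))`;
in particular the two problems have the same unique solution. -/
theorem markov_proj_two_objectives
    {X : Type*} [Fintype X] [DecidableEq X] [Nonempty X] {N : ℕ} (hN : 1 ≤ N)
    (q : Traj X N → ℝ) (hq : IsPMF q) (hqpos : ∀ ω, 0 < q ω)
    (G : (Traj X N → ℝ) → ℝ)
    (hG : ∀ m : Traj X N → ℝ, G m =
      ∑ n : Fin (N + 1), ∑ y : X, timeMarg q n.castSucc y *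
        KLd (fun z : X => transP q n y z) (fun z : X => transP m n y z)) :
    ((∀ m : Traj X N → ℝ, MarkovFeasible q m → KLd q (projM q) ≤ KLd q m) ∧
     (∀ m : Traj X N → ℝ, MarkovFeasible q m → KLd q m = KLd q (projM q) → m = projM q)) ∧
    ((∀ m : Traj X N → ℝ, MarkovFeasible q m → G (projM q) ≤ G m) ∧
     (∀ m : Traj X N → ℝ, MarkovFeasible q m → G m = G (projM q) → m = projM q)) := by
  classical
  have hGm : ∀ m : Traj X N → ℝ, G m = Dkl q m := fun m => (hG m).trans rfl
  have hGproj : G (projM q) = 0 := by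
    rw [hGm]
    unfold Dkl
    refine Finset.sum_eq_zero fun n _ => Finset.sum_eq_zero fun y _ => ?_
    have hfun : (fun z : X => transP (projM q) n y z) = fun z : X => transP q n y z :=
      funext fun z => projM_transP hqpos n y z
    rw [hfun, KLd_self (fun z => transP_pos hqpos n y z), mul_zero]
  refine ⟨⟨?_, ?_⟩, ⟨?_, ?_⟩⟩
  · intro m hm
    have h1 := KL_identity hqpos hm
    have h2 := Dkl_nonneg hqpos hm
    linarith
  · intro m hm heq
    have h1 := KL_identity hqpos hm
    exact Dkl_eq_zero hqpos hm (by linarith)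
  · intro m hm
    rw [hGm m, hGproj]
    exact Dkl_nonneg hqpos hm
  · intro m hm heq
    rw [hGm m, hGproj] at heq
    exact Dkl_eq_zero hqpos hm heq
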